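/- Let K : bD × bD → ℂ be continuous with ∫_{bD} K(w,z) dσ(w) = 1 for all z, and for small t let K_t(w,z) be kernels with ∫ K_t(w,z) dσ(w) = 1 such that: (i) K_t → K uniformly on {(w,z) : δ(w,z) ≥ a} for each a > 0, and (ii) |K_t(w,z)| ≤ C δ(w,z)^{−2n} uniformly in t. If f satisfies the Hölder condition |f(w) − f(z)| ≤ c δ(w,z)^α (0 < α < 1) and F_t(z) = ∫ f(w) K_t(w,z) dσ(w), F(z) = ∫ f(w) K(w,z) dσ(w), then sup_{z∈bD} |F_t(z) − F(z)| → 0 as t → 0. -/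

import Mathlib

open MeasureTheory Set

/-- Splitting a lintegral via an indicator bound plus a constant. -/
lemma lint_split_aux {X : Type*} [MeasurableSpace X] (σ : Measure X)
    (u g : X → ENNReal) (S : Set X) (k : ENNReal)
    (h : ∀ w, u w ≤ S.indicator g w + k) :
    ∫⁻ w, u w ∂σ ≤ (∫⁻ w in S, g w ∂σ) + k * σ Set.univ := by
  calc ∫⁻ w, u w ∂σ ≤ ∫⁻ w, (S.indicator g w + k) ∂σ := lintegral_mono h
    _ = (∫⁻ w, S.indicator g w ∂σ) + k * σ Set.univ := by
        rw [lintegral_add_right _ measurable_const, lintegral_const]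
    _ ≤ _ := add_le_add (lintegral_indicator_le _ _) le_rfl

/-- Integrability from a kernel-type bound `‖L w‖ ≤ A * δ₀ w ^ (-(2n)+α)`. -/
lemma integrable_of_kernel_bound {X : Type*} [MeasurableSpace X] (σ : Measure X)
    [IsFiniteMeasure σ] (n : ℕ) (δ0 : X → ℝ)
    (α A B : ℝ) (hA : 0 ≤ A) (heM : -(2 * (n : ℝ)) + α ≤ 0)
    (hint1 : ∫⁻ w in {w | δ0 w ≤ 1/2},
        ENNReal.ofReal (δ0 w ^ (-(2 * (n : ℝ)) + α)) ∂σ ≤ ENNReal.ofReal B)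
    (L : X → ℂ) (hm : AEStronglyMeasurable L σ)
    (hb : ∀ w, ‖L w‖ ≤ A * δ0 w ^ (-(2 * (n : ℝ)) + α)) :
    Integrable L σ := by
  refine ⟨hm, ?_⟩
  rw [hasFiniteIntegral_iff_norm]
  set eM := -(2 * (n : ℝ)) + α with heMdef
  have key : ∫⁻ w, ENNReal.ofReal ‖L w‖ ∂σ ≤
      (∫⁻ w in {w | δ0 w ≤ 1/2}, ENNReal.ofReal (A * δ0 w ^ eM) ∂σ) +
        ENNReal.ofReal (A * (1/2 : ℝ) ^ eM) * σ Set.univ := by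
    apply lint_split_aux
    intro w
    by_cases hw : δ0 w ≤ 1/2
    · rw [Set.indicator_of_mem (show w ∈ {w | δ0 w ≤ 1/2} from hw)]
      exact le_trans (ENNReal.ofReal_le_ofReal (hb w)) le_self_add
    · rw [Set.indicator_of_notMem (show w ∉ {w | δ0 w ≤ 1/2} from hw), zero_add]
      apply ENNReal.ofReal_le_ofReal
      refine le_trans (hb w) (mul_le_mul_of_nonneg_left ?_ hA)
      exact Real.rpow_le_rpow_of_nonpos (by norm_num) (le_of_not_ge hw) heM
  refine lt_of_le_of_lt key ?_
  apply ENNReal.add_lt_top.2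
  constructor
  · have : ∫⁻ w in {w | δ0 w ≤ 1/2}, ENNReal.ofReal (A * δ0 w ^ eM) ∂σ
        ≤ ENNReal.ofReal A * ENNReal.ofReal B := by
      calc ∫⁻ w in {w | δ0 w ≤ 1/2}, ENNReal.ofReal (A * δ0 w ^ eM) ∂σ
          = ∫⁻ w in {w | δ0 w ≤ 1/2},
              ENNReal.ofReal A * ENNReal.ofReal (δ0 w ^ eM) ∂σ := by
            simp_rw [← ENNReal.ofReal_mul hA]
        _ = ENNReal.ofReal A *
              ∫⁻ w in {w | δ0 w ≤ 1/2}, ENNReal.ofReal (δ0 w ^ eM) ∂σ :=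
            lintegral_const_mul' _ _ ENNReal.ofReal_ne_top
        _ ≤ _ := mul_le_mul_right hint1 _
    exact lt_of_le_of_lt this (by finiteness)
  · exact ENNReal.mul_lt_top ENNReal.ofReal_lt_top (measure_lt_top σ _)

/-- uniform convergence of the perturbed Cauchy-type integrals. If the
kernels `K_t` are normalized (`∫ K_t(·,z) dσ = 1`), converge to `K` uniformly off the
diagonal, and satisfy a uniform size bound `|K_t(w,z)| ≤ C δ(w,z)^{-2n}` on a space
with the borderline integrability property, then for Hölder `f` the integrals
`F_t(z) = ∫ f K_t(·,z) dσ` converge to `F(z) = ∫ f K(·,z) dσ` uniformly in `z`. -/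
theorem stmt15 {X : Type*} [MeasurableSpace X] (σ : Measure X) [IsFiniteMeasure σ]
    (n : ℕ) (hn : 1 ≤ n)
    (δ : X → X → ℝ) (hδ : ∀ w z, 0 ≤ δ w z)
    (c : ℝ → ℝ)
    (hint : ∀ (z : X) (r β : ℝ), 0 < r → r < 1 → 0 < β →
      ∫⁻ w in {w | δ w z ≤ r}, ENNReal.ofReal (δ w z ^ (-(2 * (n : ℝ)) + β)) ∂σ ≤
        ENNReal.ofReal (c β * r ^ β))
    (K : X → X → ℂ) (Kt : ℝ → X → X → ℂ)
    (hKnorm : ∀ z, ∫ w, K w z ∂σ = 1)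
    (hKtnorm : ∀ t z, ∫ w, Kt t w z ∂σ = 1)
    (hKint : ∀ z, Integrable (fun w => K w z) σ)
    (hKtint : ∀ t z, Integrable (fun w => Kt t w z) σ)
    -- (i) uniform convergence off the diagonal
    (hconv : ∀ a > (0 : ℝ), ∀ ε > (0 : ℝ), ∃ t₀ > (0 : ℝ), ∀ t : ℝ, |t| < t₀ →
      ∀ w z, a ≤ δ w z → ‖Kt t w z - K w z‖ ≤ ε)
    -- (ii) uniform size bounds
    (C : ℝ) (hC : 0 ≤ C)
    (hKtbd : ∀ t w z, 0 < δ w z →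
      ‖Kt t w z‖ ≤ C * δ w z ^ (-(2 * (n : ℝ))))
    (hKbd : ∀ w z, 0 < δ w z → ‖K w z‖ ≤ C * δ w z ^ (-(2 * (n : ℝ))))
    -- Hölder continuity of the data
    (f : X → ℂ) (α c₀ : ℝ) (hα : 0 < α) (hα1 : α < 1) (hc₀ : 0 ≤ c₀)
    (hf : ∀ w z, ‖f w - f z‖ ≤ c₀ * δ w z ^ α)
    (hfint : Integrable f σ)
    (Ft : ℝ → X → ℂ) (F : X → ℂ)
    (hFt : ∀ t z, Ft t z = ∫ w, f w * Kt t w z ∂σ)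
    (hF : ∀ z, F z = ∫ w, f w * K w z ∂σ) :
    ∀ ε > (0 : ℝ), ∃ t₀ > (0 : ℝ), ∀ t : ℝ, |t| < t₀ → ∀ z,
      ‖Ft t z - F z‖ ≤ ε := by
  -- translate absolute values into norms
  have hf' : ∀ w z, ‖f w - f z‖ ≤ c₀ * δ w z ^ α := fun w z => by
    exact hf w z
  have hKtbd' : ∀ t w z, 0 < δ w z → ‖Kt t w z‖ ≤ C * δ w z ^ (-(2 * (n : ℝ))) :=
    fun t w z h => by exact hKtbd t w z h
  have hKbd' : ∀ w z, 0 < δ w z → ‖K w z‖ ≤ C * δ w z ^ (-(2 * (n : ℝ))) :=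
    fun w z h => by exact hKbd w z h
  have hn' : (1 : ℝ) ≤ (n : ℝ) := by exact_mod_cast hn
  have heM : -(2 * (n : ℝ)) + α ≤ -1 := by linarith
  have heMne : -(2 * (n : ℝ)) + α ≠ 0 := by linarith
  -- pointwise product bound
  have prodbd : ∀ (z : X) (g : X → ℂ) (Cg : ℝ), 0 ≤ Cg →
      (∀ w, 0 < δ w z → ‖g w‖ ≤ Cg * δ w z ^ (-(2 * (n : ℝ)))) →
      ∀ w, ‖(f w - f z) * g w‖ ≤ c₀ * Cg * δ w z ^ (-(2 * (n : ℝ)) + α) := by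
    intro z g Cg hCg hg w
    rw [norm_mul]
    rcases eq_or_lt_of_le (hδ w z) with h0 | h0
    · have h1 : ‖f w - f z‖ = 0 := by
        refine le_antisymm ?_ (norm_nonneg _)
        have := hf' w z
        rwa [← h0, Real.zero_rpow hα.ne', mul_zero] at this
      rw [h1, zero_mul, ← h0, Real.zero_rpow heMne, mul_zero]
    · calc ‖f w - f z‖ * ‖g w‖
          ≤ (c₀ * δ w z ^ α) * (Cg * δ w z ^ (-(2 * (n : ℝ)))) :=
            mul_le_mul (hf' w z) (hg w h0) (norm_nonneg _) (by positivity)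
        _ = c₀ * Cg * δ w z ^ (-(2 * (n : ℝ)) + α) := by
            rw [Real.rpow_add h0]; ring
  -- integrability of the subtracted integrands
  have hIt : ∀ t z, Integrable (fun w => (f w - f z) * Kt t w z) σ := by
    intro t z
    exact integrable_of_kernel_bound σ n (fun w => δ w z) α (c₀ * C)
      (c α * (1/2) ^ α) (by positivity) (by linarith)
      (hint z (1/2) α (by norm_num) (by norm_num) hα) _
      ((hfint.1.sub aestronglyMeasurable_const).mul (hKtint t z).1)
      (prodbd z _ C hC (fun w h => hKtbd' t w z h))
  have hIK : ∀ z, Integrable (fun w => (f w - f z) * K w z) σ := by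
    intro z
    exact integrable_of_kernel_bound σ n (fun w => δ w z) α (c₀ * C)
      (c α * (1/2) ^ α) (by positivity) (by linarith)
      (hint z (1/2) α (by norm_num) (by norm_num) hα) _
      ((hfint.1.sub aestronglyMeasurable_const).mul (hKint z).1)
      (prodbd z _ C hC (fun w h => hKbd' w z h))
  -- identities from normalization
  have e1 : ∀ t z, ∫ w, f w * Kt t w z ∂σ
      = (∫ w, (f w - f z) * Kt t w z ∂σ) + f z := by
    intro t z
    have h2 : Integrable (fun w => f z * Kt t w z) σ := (hKtint t z).const_mul _
    have hfun : (fun w => f w * Kt t w z)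
        = fun w => (f w - f z) * Kt t w z + f z * Kt t w z := funext fun w => by ring
    rw [hfun, integral_add (hIt t z) h2, integral_const_mul, hKtnorm t z, mul_one]
  have e2 : ∀ z, ∫ w, f w * K w z ∂σ
      = (∫ w, (f w - f z) * K w z ∂σ) + f z := by
    intro z
    have h2 : Integrable (fun w => f z * K w z) σ := (hKint z).const_mul _
    have hfun : (fun w => f w * K w z)
        = fun w => (f w - f z) * K w z + f z * K w z := funext fun w => by ring
    rw [hfun, integral_add (hIK z) h2, integral_const_mul, hKnorm z, mul_one]
  intro ε hε
  -- constants
  set σX : ℝ := (σ Set.univ).toReal with hσXdef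
  have hσX0 : 0 ≤ σX := ENNReal.toReal_nonneg
  set K1 : ℝ := c₀ * (2 * C) with hK1def
  have hK1 : 0 ≤ K1 := mul_nonneg hc₀ (by linarith)
  set maxc : ℝ := max (c α) 0 with hmaxcdef
  have hmaxc : 0 ≤ maxc := le_max_right _ _
  set D : ℝ := K1 * maxc + 1 with hDdef
  have hD : 0 < D := by nlinarith [mul_nonneg hK1 hmaxc]
  set r : ℝ := min (1/2) ((ε / (3 * D)) ^ (1/α : ℝ)) with hrdef
  have hεD : 0 < ε / (3 * D) := div_pos hε (by linarith)
  have hr0 : 0 < r := lt_min (by norm_num) (Real.rpow_pos_of_pos hεD _)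
  have hr1 : r < 1 := lt_of_le_of_lt (min_le_left _ _) (by norm_num)
  have hrpow : r ^ α ≤ ε / (3 * D) := by
    have h1 : r ≤ (ε / (3 * D)) ^ (1/α : ℝ) := min_le_right _ _
    have h2 : ((ε / (3 * D)) ^ (1/α : ℝ)) ^ α = ε / (3 * D) := by
      rw [← Real.rpow_mul hεD.le, one_div, inv_mul_cancel₀ hα.ne', Real.rpow_one]
    calc r ^ α ≤ ((ε / (3 * D)) ^ (1/α : ℝ)) ^ α := Real.rpow_le_rpow hr0.le h1 hα.le
      _ = ε / (3 * D) := h2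
  have hrα0 : 0 ≤ r ^ α := Real.rpow_nonneg hr0.le α
  have hb1 : K1 * (c α * r ^ α) ≤ ε / 3 := by
    calc K1 * (c α * r ^ α) ≤ K1 * (maxc * r ^ α) :=
          mul_le_mul_of_nonneg_left (mul_le_mul_of_nonneg_right (le_max_left _ _) hrα0) hK1
      _ = (K1 * maxc) * r ^ α := by ring
      _ ≤ D * (ε / (3 * D)) := mul_le_mul (by linarith) hrpow hrα0 hD.le
      _ = ε / 3 := by field_simp
  set D2 : ℝ := K1 * σX + 1 with hD2def
  have hD2 : 0 < D2 := by nlinarith [mul_nonneg hK1 hσX0]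
  set M : ℝ := max 1 (3 * D2 / ε) with hMdef
  have hM1 : 1 ≤ M := le_max_left _ _
  have hM0 : 0 < M := by linarith
  have hMeM0 : 0 ≤ M ^ (-(2 * (n : ℝ)) + α) := Real.rpow_nonneg hM0.le _
  have hMinv : M ^ (-(2 * (n : ℝ)) + α) ≤ ε / (3 * D2) := by
    calc M ^ (-(2 * (n : ℝ)) + α) ≤ M ^ (-1 : ℝ) :=
          Real.rpow_le_rpow_of_exponent_le hM1 heM
      _ = 1 / M := by rw [Real.rpow_neg_one, one_div]
      _ ≤ 1 / (3 * D2 / ε) :=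
          one_div_le_one_div_of_le (div_pos (by linarith) hε) (le_max_right _ _)
      _ = ε / (3 * D2) := one_div_div _ _
  have hb3 : K1 * M ^ (-(2 * (n : ℝ)) + α) * σX ≤ ε / 3 := by
    calc K1 * M ^ (-(2 * (n : ℝ)) + α) * σX = (K1 * σX) * M ^ (-(2 * (n : ℝ)) + α) := by
          ring
      _ ≤ D2 * (ε / (3 * D2)) := mul_le_mul (by linarith) hMinv hMeM0 hD2.le
      _ = ε / 3 := by field_simp
  have hMα0 : 0 ≤ M ^ α := Real.rpow_nonneg hM0.le α
  set D3 : ℝ := c₀ * M ^ α * σX + 1 with hD3def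
  have hD3 : 0 < D3 := by nlinarith [mul_nonneg (mul_nonneg hc₀ hMα0) hσX0]
  set ε' : ℝ := ε / (3 * D3) with hε'def
  have hε'pos : 0 < ε' := div_pos hε (by linarith)
  have hb2 : ε' * (c₀ * M ^ α) * σX ≤ ε / 3 := by
    calc ε' * (c₀ * M ^ α) * σX = ε' * (c₀ * M ^ α * σX) := by ring
      _ ≤ ε' * D3 := mul_le_mul_of_nonneg_left (by linarith) hε'pos.le
      _ = ε / 3 := by rw [hε'def]; field_simp
  -- choose t₀ from uniform convergence off the diagonal
  obtain ⟨t₀, ht₀, hconv'⟩ := hconv r hr0 ε' hε'pos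
  refine ⟨t₀, ht₀, fun t ht z => ?_⟩
  have hconv'' : ∀ w, r ≤ δ w z → ‖Kt t w z - K w z‖ ≤ ε' := fun w h => by
    exact hconv' t ht w z h
  have hsubbd : ∀ w, 0 < δ w z →
      ‖Kt t w z - K w z‖ ≤ 2 * C * δ w z ^ (-(2 * (n : ℝ))) := by
    intro w h
    calc ‖Kt t w z - K w z‖ ≤ ‖Kt t w z‖ + ‖K w z‖ := norm_sub_le _ _
      _ ≤ C * δ w z ^ (-(2 * (n : ℝ))) + C * δ w z ^ (-(2 * (n : ℝ))) :=
          add_le_add (hKtbd' t w z h) (hKbd' w z h)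
      _ = 2 * C * δ w z ^ (-(2 * (n : ℝ))) := by ring
  have hGbd : ∀ w, ‖(f w - f z) * (Kt t w z - K w z)‖
      ≤ K1 * δ w z ^ (-(2 * (n : ℝ)) + α) := by
    intro w
    have := prodbd z (fun w => Kt t w z - K w z) (2 * C) (by linarith) hsubbd w
    calc ‖(f w - f z) * (Kt t w z - K w z)‖
        ≤ c₀ * (2 * C) * δ w z ^ (-(2 * (n : ℝ)) + α) := this
      _ = K1 * δ w z ^ (-(2 * (n : ℝ)) + α) := by rw [hK1def]
  -- the key representation of the difference
  have hdiff : Ft t z - F z = ∫ w, (f w - f z) * (Kt t w z - K w z) ∂σ := by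
    rw [hFt, hF, e1, e2]
    have hfun : (fun w => (f w - f z) * (Kt t w z - K w z))
        = fun w => (f w - f z) * Kt t w z - (f w - f z) * K w z := funext fun w => by ring
    rw [hfun, integral_sub (hIt t z) (hIK z)]
    ring
  -- pointwise bound for the lintegral
  have hptw : ∀ w, ENNReal.ofReal ‖(f w - f z) * (Kt t w z - K w z)‖ ≤
      Set.indicator {w | δ w z ≤ r}
        (fun w => ENNReal.ofReal (K1 * δ w z ^ (-(2 * (n : ℝ)) + α))) w
      + ENNReal.ofReal (ε' * (c₀ * M ^ α) + K1 * M ^ (-(2 * (n : ℝ)) + α)) := by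
    intro w
    have hKM_nonneg : 0 ≤ K1 * M ^ (-(2 * (n : ℝ)) + α) := mul_nonneg hK1 hMeM0
    by_cases h1 : δ w z ≤ r
    · rw [Set.indicator_of_mem (show w ∈ {w | δ w z ≤ r} from h1)]
      exact le_trans (ENNReal.ofReal_le_ofReal (hGbd w)) le_self_add
    · rw [Set.indicator_of_notMem (show w ∉ {w | δ w z ≤ r} from h1), zero_add]
      apply ENNReal.ofReal_le_ofReal
      push_neg at h1
      by_cases h2 : δ w z ≤ M
      · have hh : ‖(f w - f z) * (Kt t w z - K w z)‖ ≤ (c₀ * M ^ α) * ε' := by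
          rw [norm_mul]
          refine mul_le_mul ?_ (hconv'' w h1.le) (norm_nonneg _)
            (mul_nonneg hc₀ hMα0)
          exact le_trans (hf' w z)
            (mul_le_mul_of_nonneg_left (Real.rpow_le_rpow (hδ w z) h2 hα.le) hc₀)
        calc ‖(f w - f z) * (Kt t w z - K w z)‖ ≤ (c₀ * M ^ α) * ε' := hh
          _ = ε' * (c₀ * M ^ α) := mul_comm _ _
          _ ≤ ε' * (c₀ * M ^ α) + K1 * M ^ (-(2 * (n : ℝ)) + α) :=
              le_add_of_nonneg_right hKM_nonneg
      · push_neg at h2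
        calc ‖(f w - f z) * (Kt t w z - K w z)‖
            ≤ K1 * δ w z ^ (-(2 * (n : ℝ)) + α) := hGbd w
          _ ≤ K1 * M ^ (-(2 * (n : ℝ)) + α) :=
              mul_le_mul_of_nonneg_left
                (Real.rpow_le_rpow_of_nonpos hM0 h2.le (by linarith)) hK1
          _ ≤ ε' * (c₀ * M ^ α) + K1 * M ^ (-(2 * (n : ℝ)) + α) :=
              le_add_of_nonneg_left (mul_nonneg hε'pos.le (mul_nonneg hc₀ hMα0))
  -- the lintegral estimate
  have hlin : ∫⁻ w, ENNReal.ofReal ‖(f w - f z) * (Kt t w z - K w z)‖ ∂σ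
      ≤ ENNReal.ofReal ε := by
    refine le_trans (lint_split_aux σ _ _ _ _ hptw) ?_
    have t1 : ∫⁻ w in {w | δ w z ≤ r},
        ENNReal.ofReal (K1 * δ w z ^ (-(2 * (n : ℝ)) + α)) ∂σ ≤ ENNReal.ofReal (ε / 3) := by
      calc ∫⁻ w in {w | δ w z ≤ r},
            ENNReal.ofReal (K1 * δ w z ^ (-(2 * (n : ℝ)) + α)) ∂σ
          = ENNReal.ofReal K1 *
              ∫⁻ w in {w | δ w z ≤ r},
                ENNReal.ofReal (δ w z ^ (-(2 * (n : ℝ)) + α)) ∂σ := by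
            simp_rw [ENNReal.ofReal_mul hK1]
            exact lintegral_const_mul' _ _ ENNReal.ofReal_ne_top
        _ ≤ ENNReal.ofReal K1 * ENNReal.ofReal (c α * r ^ α) :=
            mul_le_mul_right (hint z r α hr0 hr1 hα) _
        _ = ENNReal.ofReal (K1 * (c α * r ^ α)) := (ENNReal.ofReal_mul hK1).symm
        _ ≤ ENNReal.ofReal (ε / 3) := ENNReal.ofReal_le_ofReal hb1
    have t2 : ENNReal.ofReal (ε' * (c₀ * M ^ α) + K1 * M ^ (-(2 * (n : ℝ)) + α))
        * σ Set.univ ≤ ENNReal.ofReal (ε / 3 + ε / 3) := by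
      rw [← ENNReal.ofReal_toReal (measure_ne_top σ Set.univ), ← hσXdef,
        ← ENNReal.ofReal_mul (by positivity)]
      apply ENNReal.ofReal_le_ofReal
      have hexp : (ε' * (c₀ * M ^ α) + K1 * M ^ (-(2 * (n : ℝ)) + α)) * σX
          = ε' * (c₀ * M ^ α) * σX + K1 * M ^ (-(2 * (n : ℝ)) + α) * σX := by ring
      rw [hexp]
      exact add_le_add hb2 hb3
    calc _ ≤ ENNReal.ofReal (ε / 3) + ENNReal.ofReal (ε / 3 + ε / 3) := add_le_add t1 t2
      _ = ENNReal.ofReal ε := by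
          rw [← ENNReal.ofReal_add (by positivity) (by positivity)]
          congr 1
          ring
  calc ‖Ft t z - F z‖
      = ‖∫ w, (f w - f z) * (Kt t w z - K w z) ∂σ‖ := by
        rw [hdiff]
    _ ≤ (∫⁻ w, ENNReal.ofReal ‖(f w - f z) * (Kt t w z - K w z)‖ ∂σ).toReal :=
        norm_integral_le_lintegral_norm _
    _ ≤ (ENNReal.ofReal ε).toReal := ENNReal.toReal_mono ENNReal.ofReal_ne_top hlin
    _ = ε := ENNReal.toReal_ofReal hε.le
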